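/- Let P > 0 and β ∈ ℝ, and define R(t) := (∫₀^t cos(2πs/P − β) ds, ∫₀^t sin(2πs/P − β) ds). Then for every t ≥ 0, Area(R)|₀^t = (P/(4π)) (t − (P/(2π)) sin(2πt/P)); in particular the value is independent of β, and Area(R)|₀^t ≥ t³ / (2π² P) for all t ∈ [0, P]. -/

import Mathlib

open MeasureTheory Real

noncomputable section

/-- The area swept by the planar curve `R = (R₁, R₂)` on `[a, b]`:
`Area(R)|_a^b = ½ ∫_a^b (R₂' R₁ − R₁' R₂)`. -/
def sweptArea (R₁ R₂ : ℝ → ℝ) (a b : ℝ) : ℝ :=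
  (1 / 2) * ∫ s in a..b, (deriv R₂ s * R₁ s - deriv R₁ s * R₂ s)

/-- The excess swept by the planar curve `R = (R₁, R₂)` on `[0, t]`:
`Exc(R)|₀^t = Σ_{ℓ,m} ∫₀^t (∫₀^s |ξ R_ℓ'(ξ)| dξ) |R_m'(s)| ds`. -/
def excess (R₁ R₂ : ℝ → ℝ) (t : ℝ) : ℝ :=
  ∑ l : Fin 2, ∑ m : Fin 2,
    ∫ s in (0:ℝ)..t,
      (∫ ξ in (0:ℝ)..s, |ξ * deriv (![R₁, R₂] l) ξ|) * |deriv (![R₁, R₂] m) s|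

lemma pos_aux (f f' : ℝ → ℝ) (hf : ∀ x, HasDerivAt f (f' x) x) (h0 : f 0 = 0)
    (hd : ∀ x, 0 ≤ x → 0 ≤ f' x) : ∀ x, 0 ≤ x → 0 ≤ f x := by
  intro x hx
  have hmono : MonotoneOn f (Set.Ici (0:ℝ)) := by
    apply monotoneOn_of_deriv_nonneg (convex_Ici 0)
    · exact fun y _ => (hf y).continuousAt.continuousWithinAt
    · intro y _; exact (hf y).differentiableAt.differentiableWithinAt
    · intro y hy
      rw [(hf y).deriv]
      exact hd y (le_of_lt (by simpa using hy))
  have := hmono Set.self_mem_Ici hx hx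
  simpa [h0] using this

lemma sin_ge (x : ℝ) (hx : 0 ≤ x) : x - x ^ 3 / 6 ≤ Real.sin x := by
  have := pos_aux (fun x => Real.sin x - x + x ^ 3 / 6)
    (fun x => Real.cos x - 1 + x ^ 2 / 2)
    (fun x => by
      have h1 := (Real.hasDerivAt_sin x).sub (hasDerivAt_id x)
      have h2 : HasDerivAt (fun x : ℝ => x ^ 3 / 6) (x ^ 2 / 2) x := by
        have := (hasDerivAt_pow 3 x).div_const 6
        exact this.congr_deriv (by ring)
      exact h1.add h2)
    (by norm_num)
    (fun x _ => by nlinarith [Real.one_sub_sq_div_two_le_cos (x := x)])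
    x hx
  linarith

lemma cos_le (x : ℝ) (hx : 0 ≤ x) : Real.cos x ≤ 1 - x ^ 2 / 2 + x ^ 4 / 24 := by
  have := pos_aux (fun x => 1 - x ^ 2 / 2 + x ^ 4 / 24 - Real.cos x)
    (fun x => -x + x ^ 3 / 6 + Real.sin x)
    (fun x => by
      have h2 : HasDerivAt (fun x : ℝ => x ^ 2 / 2) x x := by
        simpa using (hasDerivAt_pow 2 x).div_const 2
      have h4 : HasDerivAt (fun x : ℝ => x ^ 4 / 24) (x ^ 3 / 6) x := by
        have := (hasDerivAt_pow 4 x).div_const 24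
        exact this.congr_deriv (by ring)
      have := (((hasDerivAt_const x (1:ℝ)).sub h2).add h4).sub (Real.hasDerivAt_cos x)
      exact this.congr_deriv (by ring))
    (by norm_num)
    (fun x hx => by nlinarith [sin_ge x hx])
    x hx
  linarith

lemma sin_le5 (x : ℝ) (hx : 0 ≤ x) : Real.sin x ≤ x - x ^ 3 / 6 + x ^ 5 / 120 := by
  have := pos_aux (fun x => x - x ^ 3 / 6 + x ^ 5 / 120 - Real.sin x)
    (fun x => 1 - x ^ 2 / 2 + x ^ 4 / 24 - Real.cos x)
    (fun x => by
      have h3 : HasDerivAt (fun x : ℝ => x ^ 3 / 6) (x ^ 2 / 2) x := by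
        have := (hasDerivAt_pow 3 x).div_const 6
        exact this.congr_deriv (by ring)
      have h5 : HasDerivAt (fun x : ℝ => x ^ 5 / 120) (x ^ 4 / 24) x := by
        have := (hasDerivAt_pow 5 x).div_const 120
        exact this.congr_deriv (by ring)
      have := (((hasDerivAt_id x).sub h3).add h5).sub (Real.hasDerivAt_sin x)
      exact this.congr_deriv (by ring))
    (by norm_num)
    (fun x hx => by nlinarith [cos_le x hx])
    x hx
  linarith

lemma key_ineq (x : ℝ) (hx0 : 0 ≤ x) (hx2 : x ≤ 2 * π) :
    x ^ 3 / (2 * π ^ 3) ≤ x - Real.sin x := by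
  have hπ := Real.pi_gt_d6
  have hπ' := Real.pi_lt_d2
  rcases le_or_gt x π with h | h
  · have h5 := sin_le5 x hx0
    have hx2' : x ^ 2 ≤ π ^ 2 := by nlinarith
    have hπ3 : (31:ℝ) ≤ π ^ 3 := by nlinarith
    have hπ2 : π ^ 2 ≤ 9.9225 := by nlinarith
    have hx5 : x ^ 3 * x ^ 2 ≤ x ^ 3 * π ^ 2 :=
      mul_le_mul_of_nonneg_left hx2' (pow_nonneg hx0 3)
    have hx5' : x ^ 3 * π ^ 2 ≤ x ^ 3 * 9.9225 :=
      mul_le_mul_of_nonneg_left hπ2 (pow_nonneg hx0 3)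
    have : x ^ 3 / (2 * π ^ 3) ≤ x ^ 3 / 6 - x ^ 5 / 120 := by
      rw [div_le_iff₀ (by positivity)]
      nlinarith [pow_nonneg hx0 3, mul_le_mul_of_nonneg_right hπ3 (pow_nonneg hx0 3)]
    linarith
  · have hs : Real.sin x ≤ 0 := by
      have : Real.sin (x - π) = -Real.sin x := Real.sin_sub_pi x
      nlinarith [Real.sin_nonneg_of_nonneg_of_le_pi (x := x - π) (by linarith) (by linarith)]
    have hxpos : 0 < x := lt_trans (by nlinarith) h
    have hx2sq : x ^ 2 ≤ 4 * π ^ 2 := by nlinarith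
    have : x ^ 3 / (2 * π ^ 3) ≤ x := by
      rw [div_le_iff₀ (by positivity)]
      have h42 : 4 * π ^ 2 ≤ 2 * π ^ 3 := by nlinarith
      nlinarith [mul_le_mul_of_nonneg_left hx2sq (le_of_lt hxpos),
        mul_le_mul_of_nonneg_left h42 (le_of_lt hxpos)]
    linarith

/-- **Area swept by the circular arc of a pointed drop.** For `P > 0`, `β ∈ ℝ`, and
`R(t) = (∫₀^t cos(2πs/P − β) ds, ∫₀^t sin(2πs/P − β) ds)`, one has, for every `t ≥ 0`,
`Area(R)|₀^t = (P/(4π))(t − (P/(2π)) sin(2πt/P))` — in particular independent of `β` —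
and `Area(R)|₀^t ≥ t³/(2π²P)` for all `t ∈ [0, P]`. -/
theorem pointed_drop_arc_area (P β : ℝ) (hP : 0 < P) :
    (∀ t : ℝ, 0 ≤ t →
      sweptArea (fun t => ∫ s in (0:ℝ)..t, Real.cos (2 * Real.pi * s / P - β))
          (fun t => ∫ s in (0:ℝ)..t, Real.sin (2 * Real.pi * s / P - β)) 0 t
        = (P / (4 * Real.pi)) *
            (t - (P / (2 * Real.pi)) * Real.sin (2 * Real.pi * t / P))) ∧
    ∀ t ∈ Set.Icc (0:ℝ) P,
      t ^ 3 / (2 * Real.pi ^ 2 * P) ≤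
        sweptArea (fun t => ∫ s in (0:ℝ)..t, Real.cos (2 * Real.pi * s / P - β))
          (fun t => ∫ s in (0:ℝ)..t, Real.sin (2 * Real.pi * s / P - β)) 0 t := by
  have hπ : (0:ℝ) < π := Real.pi_pos
  set F₁ : ℝ → ℝ := fun t => P / (2 * π) * (Real.sin (2 * π * t / P - β) + Real.sin β) with hF₁def
  set F₂ : ℝ → ℝ := fun t => P / (2 * π) * (Real.cos β - Real.cos (2 * π * t / P - β)) with hF₂def
  have hlin : ∀ t : ℝ, HasDerivAt (fun t : ℝ => 2 * π * t / P - β) (2 * π / P) t := by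
    intro t
    have := (((hasDerivAt_id t).const_mul (2 * π)).div_const P).sub_const β
    simpa using this
  have hd₁ : ∀ t : ℝ, HasDerivAt F₁ (Real.cos (2 * π * t / P - β)) t := by
    intro t
    have h2 : HasDerivAt (fun t : ℝ => Real.sin (2 * π * t / P - β))
        (Real.cos (2 * π * t / P - β) * (2 * π / P)) t := by
      simpa [Function.comp_def] using (Real.hasDerivAt_sin (2 * π * t / P - β)).comp t (hlin t)
    have h3 := (h2.add_const (Real.sin β)).const_mul (P / (2 * π))
    refine h3.congr_deriv ?_
    field_simp
  have hd₂ : ∀ t : ℝ, HasDerivAt F₂ (Real.sin (2 * π * t / P - β)) t := by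
    intro t
    have h2 : HasDerivAt (fun t : ℝ => Real.cos (2 * π * t / P - β))
        (-Real.sin (2 * π * t / P - β) * (2 * π / P)) t := by
      simpa [Function.comp_def] using (Real.hasDerivAt_cos (2 * π * t / P - β)).comp t (hlin t)
    have h3 := (h2.const_sub (Real.cos β)).const_mul (P / (2 * π))
    refine h3.congr_deriv ?_
    field_simp
  have hR₁ : (fun t => ∫ s in (0:ℝ)..t, Real.cos (2 * π * s / P - β)) = F₁ := by
    funext t
    rw [intervalIntegral.integral_eq_sub_of_hasDerivAt (fun s _ => hd₁ s)
      ((Continuous.intervalIntegrable (by fun_prop) 0 t))]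
    simp [hF₁def, mul_comm]
  have hR₂ : (fun t => ∫ s in (0:ℝ)..t, Real.sin (2 * π * s / P - β)) = F₂ := by
    funext t
    rw [intervalIntegral.integral_eq_sub_of_hasDerivAt (fun s _ => hd₂ s)
      ((Continuous.intervalIntegrable (by fun_prop) 0 t))]
    simp [hF₂def]
  have hint : ∀ s : ℝ, deriv F₂ s * F₁ s - deriv F₁ s * F₂ s
      = P / (2 * π) * (1 - Real.cos (2 * π * s / P)) := by
    intro s
    have hc : Real.cos (2 * π * s / P)
        = Real.cos (2 * π * s / P - β) * Real.cos β
          - Real.sin (2 * π * s / P - β) * Real.sin β := by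
      conv_lhs => rw [show 2 * π * s / P = (2 * π * s / P - β) + β by ring]
      rw [Real.cos_add]
    rw [(hd₂ s).deriv, (hd₁ s).deriv, hF₁def, hF₂def, hc]
    linear_combination (P / (2 * π)) * Real.sin_sq_add_cos_sq (2 * π * s / P - β)
  have hG : ∀ t : ℝ, HasDerivAt (fun s => P / (2 * π) * (s - (P / (2 * π)) * Real.sin (2 * π * s / P)))
      (P / (2 * π) * (1 - Real.cos (2 * π * t / P))) t := by
    intro t
    have h1 : HasDerivAt (fun t : ℝ => 2 * π * t / P) (2 * π / P) t := by
      have := ((hasDerivAt_id t).const_mul (2 * π)).div_const P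
      simpa using this
    have h2 := (Real.hasDerivAt_sin (2 * π * t / P)).comp t h1
    have h3 := ((hasDerivAt_id t).sub (h2.const_mul (P / (2 * π)))).const_mul (P / (2 * π))
    refine h3.congr_deriv ?_
    field_simp
  have harea : ∀ t : ℝ,
      sweptArea (fun t => ∫ s in (0:ℝ)..t, Real.cos (2 * π * s / P - β))
          (fun t => ∫ s in (0:ℝ)..t, Real.sin (2 * π * s / P - β)) 0 t
        = (P / (4 * π)) * (t - (P / (2 * π)) * Real.sin (2 * π * t / P)) := by
    intro t
    rw [sweptArea]
    have heq : (∫ s in (0:ℝ)..t,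
          (deriv (fun t => ∫ s in (0:ℝ)..t, Real.sin (2 * π * s / P - β)) s
              * (∫ x in (0:ℝ)..s, Real.cos (2 * π * x / P - β))
            - deriv (fun t => ∫ s in (0:ℝ)..t, Real.cos (2 * π * s / P - β)) s
              * (∫ x in (0:ℝ)..s, Real.sin (2 * π * x / P - β))))
        = ∫ s in (0:ℝ)..t, P / (2 * π) * (1 - Real.cos (2 * π * s / P)) := by
      apply intervalIntegral.integral_congr
      intro s _
      beta_reduce
      rw [hR₁, hR₂, show (∫ x in (0:ℝ)..s, Real.cos (2 * π * x / P - β)) = F₁ s from congrFun hR₁ s,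
        show (∫ x in (0:ℝ)..s, Real.sin (2 * π * x / P - β)) = F₂ s from congrFun hR₂ s]
      exact hint s
    rw [heq, intervalIntegral.integral_eq_sub_of_hasDerivAt (fun s _ => hG s)
      ((Continuous.intervalIntegrable (by fun_prop) 0 t))]
    simp only [mul_zero, zero_div, Real.sin_zero, sub_zero]
    field_simp
    ring_nf
  constructor
  · exact fun t _ => harea t
  · rintro t ⟨ht0, htP⟩
    rw [harea t]
    have hx0 : 0 ≤ 2 * π * t / P := by positivity
    have hx2 : 2 * π * t / P ≤ 2 * π := by
      rw [div_le_iff₀ hP]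
      nlinarith
    have hk := key_ineq _ hx0 hx2
    have hexp : (2 * π * t / P) ^ 3 / (2 * π ^ 3) = 4 * t ^ 3 / P ^ 3 := by
      field_simp
      ring
    rw [hexp] at hk
    have h1 : (P / (4 * π)) * (t - (P / (2 * π)) * Real.sin (2 * π * t / P))
        = P ^ 2 / (8 * π ^ 2) * (2 * π * t / P - Real.sin (2 * π * t / P)) := by
      field_simp
      ring
    rw [h1]
    calc t ^ 3 / (2 * π ^ 2 * P) = P ^ 2 / (8 * π ^ 2) * (4 * t ^ 3 / P ^ 3) := by
          field_simp
          ring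
      _ ≤ _ := mul_le_mul_of_nonneg_left hk (by positivity)


end
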